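/- Let A, B, C, D be nonempty finite types with decidable equality. Let 𝓜 : Matrix A A ℂ →ₗ[ℂ] Matrix B B ℂ and 𝓝 : Matrix C C ℂ →ₗ[ℂ] Matrix D D ℂ be linear maps, and let 𝓣 : Matrix (A × C) (A × C) ℂ →ₗ[ℂ] Matrix (B × D) (B × D) ℂ be a linear map satisfying 𝓣 (X ⊗ₖ Y) = (𝓜 X) ⊗ₖ (𝓝 Y) for all X : Matrix A A ℂ and Y : Matrix C C ℂ. Then for all indices, C(𝓣) ((b,d),(a,c)) ((b',d'),(a',c')) = C(𝓜) (b,a) (b',a') * C(𝓝) (d,c) (d',c'). In other words, the Choi matrix of the parallel composition 𝓜 ⊗ 𝓝 is the swap tensor product of the Choi matrices of 𝓜 and 𝓝. -/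

import Mathlib

open Matrix Kronecker BigOperators

/-- The Choi matrix of a linear map on matrices. -/
noncomputable def choiMatrix {A B : Type*} [Fintype A] [DecidableEq A]
    (E : Matrix A A ℂ →ₗ[ℂ] Matrix B B ℂ) : Matrix (B × A) (B × A) ℂ :=
  Matrix.of fun p q => E (Matrix.single p.2 q.2 1) p.1 q.1


lemma std_kron {A C : Type*} [DecidableEq A] [DecidableEq C]
    (a a' : A) (c c' : C) :
    (Matrix.single (a, c) (a', c') (1 : ℂ)) =
      Matrix.single a a' 1 ⊗ₖ Matrix.single c c' 1 := by
  ext ⟨x, y⟩ ⟨x', y'⟩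
  simp [Matrix.single, Matrix.kroneckerMap_apply, Prod.ext_iff, ite_and]
  aesop

theorem stmt1 {A B C D : Type*} [Fintype A] [Fintype B] [Fintype C] [Fintype D]
    [Nonempty A] [Nonempty B] [Nonempty C] [Nonempty D]
    [DecidableEq A] [DecidableEq B] [DecidableEq C] [DecidableEq D]
    (M : Matrix A A ℂ →ₗ[ℂ] Matrix B B ℂ) (N : Matrix C C ℂ →ₗ[ℂ] Matrix D D ℂ)
    (T : Matrix (A × C) (A × C) ℂ →ₗ[ℂ] Matrix (B × D) (B × D) ℂ)
    (hT : ∀ (X : Matrix A A ℂ) (Y : Matrix C C ℂ), T (X ⊗ₖ Y) = (M X) ⊗ₖ (N Y)) :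
    ∀ (b b' : B) (d d' : D) (a a' : A) (c c' : C),
      choiMatrix T ((b, d), (a, c)) ((b', d'), (a', c')) =
        choiMatrix M (b, a) (b', a') * choiMatrix N (d, c) (d', c') := by
  intro b b' d d' a a' c c'
  simp only [choiMatrix, Matrix.of_apply, std_kron, hT, Matrix.kroneckerMap_apply]
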